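/- The image of the gradient map μ_𝔞 : V → 𝔞^* associated to an abelian group A = exp(𝔞) acting linearly on V equals the polyhedral cone C(α_1,...,α_n) generated by all the weights, and the set {x ∈ V : μ_𝔞(closure(A·x)) = μ_𝔞(V)} is open and dense in V. -/

import Mathlib

open RealInnerProductSpace Finset Filter


lemma exp_eig {V : Type*} [NormedAddCommGroup V] [InnerProductSpace ℝ V] [FiniteDimensional ℝ V]
    (T : V →L[ℝ] V) (a : ℝ) (w : V) (h : T w = a • w) :
    NormedSpace.exp T w = Real.exp a • w := by
  have hpow : ∀ k : ℕ, (T ^ k) w = a ^ k • w := by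
    intro k
    induction k with
    | zero => simp
    | succ k ih =>
      rw [pow_succ, ContinuousLinearMap.mul_apply, h, map_smul, ih, smul_smul, pow_succ]
      ring_nf
  have hsum := NormedSpace.expSeries_summable' (𝕂 := ℝ) T
  have h1 : NormedSpace.exp T w = ∑' k : ℕ, ((k.factorial : ℝ)⁻¹ • T ^ k) w := by
    rw [NormedSpace.exp_eq_tsum ℝ]
    exact ((ContinuousLinearMap.apply ℝ V w).map_tsum hsum).symm ▸ rfl
  rw [h1]
  have h2 : ∀ k : ℕ, ((k.factorial : ℝ)⁻¹ • T ^ k) w = ((k.factorial : ℝ)⁻¹ * a ^ k) • w := by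
    intro k
    rw [ContinuousLinearMap.smul_apply, hpow, smul_smul]
  simp_rw [h2]
  have hs : Summable (fun k : ℕ => (k.factorial : ℝ)⁻¹ * a ^ k) := by
    simpa [div_eq_inv_mul] using Real.summable_pow_div_factorial a
  rw [Summable.tsum_smul_const hs]
  congr 1
  rw [Real.exp_eq_exp_ℝ, NormedSpace.exp_eq_tsum ℝ]
  simp [smul_eq_mul]

lemma sq_le_exp_two_mul (s : ℝ) (hs : 0 ≤ s) : s^2 ≤ Real.exp (2*s) := by
  have h1 : s + 1 ≤ Real.exp s := Real.add_one_le_exp s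
  have h2 : s^2 ≤ (s+1)^2 := by nlinarith
  have h3 : (s+1)^2 ≤ (Real.exp s)^2 := by nlinarith [Real.exp_pos s]
  calc s^2 ≤ (Real.exp s)^2 := le_trans h2 h3
    _ = Real.exp (2*s) := by rw [two_mul, Real.exp_add, sq]

-- lower bound for h i s = a/2 e^{2s} - t s
lemma hlow (a t s : ℝ) (ha : 0 ≤ a) (ht : 0 ≤ t) (hat : a = 0 → t = 0) :
    (if a = 0 then (0:ℝ) else -(t)^2/(2*a)) ≤ a/2 * Real.exp (2*s) - t * s := by
  by_cases h0 : a = 0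
  · simp [h0, hat h0]
  · rw [if_neg h0]
    have ha' : 0 < a := lt_of_le_of_ne ha (Ne.symm h0)
    rcases le_or_gt s 0 with hs | hs
    · have h1 : 0 ≤ a/2 * Real.exp (2*s) := by positivity
      have h2 : 0 ≤ -(t*s) := by nlinarith
      have h3 : -(t)^2/(2*a) ≤ 0 := by
        apply div_nonpos_of_nonpos_of_nonneg <;> nlinarith [sq_nonneg t]
      nlinarith
    · have he : s^2 ≤ Real.exp (2*s) := sq_le_exp_two_mul s hs.le
      have key : 0 ≤ a/2 * s^2 - t*s + t^2/(2*a) := by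
        have := sq_nonneg (a*s - t)
        have : 0 ≤ (a*s - t)^2 / (2*a) := by positivity
        calc (0:ℝ) ≤ (a*s-t)^2/(2*a) := this
          _ = a/2 * s^2 - t*s + t^2/(2*a) := by field_simp; ring
      have hdiv : -t^2/(2*a) = -(t^2/(2*a)) := by ring
      nlinarith [mul_le_mul_of_nonneg_left he (by linarith : (0:ℝ) ≤ a/2), hdiv]


lemma bnd (a t C s : ℝ) (ha : 0 < a) (ht : 0 ≤ t) (hC : 0 ≤ C)
    (h : a/2 * Real.exp (2*s) - t*s ≤ C) :
    a * Real.exp (2*s) ≤ max a (4*C + 4*t^2/a) := by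
  rcases le_or_gt s 0 with hs | hs
  · have h1 : Real.exp (2*s) ≤ 1 := Real.exp_le_one_iff.mpr (by linarith)
    have h2 : a * Real.exp (2*s) ≤ a * 1 := mul_le_mul_of_nonneg_left h1 ha.le
    simpa using le_trans h2 (le_max_left _ _)
  · have he : s^2 ≤ Real.exp (2*s) := sq_le_exp_two_mul s hs.le
    have hinv : a * (t^2 / a) = t^2 := mul_div_cancel₀ _ ha.ne'
    have hts : t * s ≤ a * s^2/4 + t^2/a := by
      nlinarith [sq_nonneg (a * s - 2 * t)]
    have hfin : a * Real.exp (2*s) ≤ 4*C + 4*t^2/a := by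
      have hd : 4*t^2/a = 4*(t^2/a) := by ring
      rw [hd]
      nlinarith [mul_le_mul_of_nonneg_left he (by linarith : (0:ℝ) ≤ a / 2)]
    exact le_trans hfin (le_max_right _ _)

lemma absbd (d nu C eps x y : ℝ) (hd : 0 < d) (hC : 0 ≤ C) (heps : 0 < eps) (hnu : 0 ≤ nu)
    (hde : d * (4*(C+1)) = eps^2) (hdu : d * nu^2 ≤ C) (hxy : |x| ≤ nu * y) (hy : 0 ≤ y) :
    |-(2*d*x)| ≤ eps * y := by
  have h4dC : 4*d*C ≤ eps^2 := by nlinarith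
  have hkey : 2*d*nu ≤ eps := by nlinarith [sq_nonneg (2*d*nu - eps)]
  have h1 : |-(2*d*x)| = 2*d*|x| := by
    rw [abs_neg, abs_mul, abs_of_nonneg (by positivity : (0:ℝ) ≤ 2*d)]
  rw [h1]
  calc 2*d*|x| ≤ 2*d*(nu*y) := by nlinarith [abs_nonneg x]
    _ = (2*d*nu)*y := by ring
    _ ≤ eps * y := mul_le_mul_of_nonneg_right hkey hy

lemma keylem {E : Type*} [NormedAddCommGroup E] [InnerProductSpace ℝ E] [FiniteDimensional ℝ E]
    (n : ℕ) (a t : Fin n → ℝ) (ha : ∀ i, 0 ≤ a i) (ht : ∀ i, 0 ≤ t i)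
    (hat : ∀ i, a i = 0 → t i = 0) (β : Fin n → E →L[ℝ] ℝ) :
    ∃ B : ℝ, ∀ ε : ℝ, 0 < ε → ∃ u : E,
      (∀ i, a i * Real.exp (2 * β i u) ≤ B) ∧
      (∀ w : E, |∑ i, (a i * Real.exp (2 * β i u) - t i) * β i w| ≤ ε * ‖w‖) := by
  classical
  set m : Fin n → ℝ := fun i => if a i = 0 then (0:ℝ) else -(t i)^2/(2 * a i) with hm_def
  have hm : ∀ i (s : ℝ), m i ≤ a i/2 * Real.exp (2*s) - t i * s :=
    fun i s => hlow (a i) (t i) s (ha i) (ht i) (hat i)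
  have hm0 : ∀ i, m i ≤ 0 := by
    intro i
    by_cases h0 : a i = 0
    · simp [hm_def, h0]
    · have : 0 < a i := lt_of_le_of_ne (ha i) (Ne.symm h0)
      simp only [hm_def, if_neg h0]
      apply div_nonpos_of_nonpos_of_nonneg <;> nlinarith [sq_nonneg (t i)]
  set C : ℝ := (∑ i, a i / 2) - ∑ i, m i with hC_def
  have hC0 : 0 ≤ C := by
    have : ∀ i, m i ≤ a i / 2 := by
      intro i
      have := hm i 0
      simpa using this
    have h2 : ∑ i, m i ≤ ∑ i, a i / 2 := Finset.sum_le_sum (fun i _ => this i)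
    simp only [hC_def]; linarith
  set Bi : Fin n → ℝ := fun i => max (a i) (4*C + 4*(t i)^2/(a i)) with hBi_def
  refine ⟨∑ i, Bi i, ?_⟩
  intro ε hε
  set δ : ℝ := ε^2/(4*(C+1)) with hδ_def
  have hδ : 0 < δ := by positivity
  set f : E → ℝ := fun u => (∑ i, (a i/2 * Real.exp (2 * β i u) - t i * β i u)) + δ * ‖u‖^2
    with hf_def
  -- lower bound
  have flb : ∀ u : E, (∑ i, m i) + δ * ‖u‖^2 ≤ f u := by
    intro u
    have : ∑ i, m i ≤ ∑ i, (a i/2 * Real.exp (2 * β i u) - t i * β i u) :=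
      Finset.sum_le_sum (fun i _ => hm i (β i u))
    simp only [hf_def]; linarith
  -- existence of minimizer
  have hcont : Continuous f := by
    apply Continuous.add _ (by continuity)
    apply continuous_finset_sum
    intro i _
    exact ((continuous_const.mul ((continuous_const.mul (β i).continuous).rexp)).sub
      (continuous_const.mul (β i).continuous))
  have hcoer : Tendsto f (cocompact E) atTop := by
    apply tendsto_atTop_mono flb
    have h1 : Tendsto (fun r : ℝ => (∑ i, m i) + δ * r^2) atTop atTop := by
      apply tendsto_atTop_add_const_left
      exact (tendsto_pow_atTop two_ne_zero).const_mul_atTop hδ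
    exact h1.comp tendsto_norm_cocompact_atTop
  obtain ⟨u, hu⟩ := hcont.exists_forall_le hcoer
  -- derivative at the minimum
  have hderiv : HasFDerivAt f
      ((∑ i, (a i * Real.exp (2 * β i u) - t i) • (β i)) + (2*δ) • (innerSL ℝ u)) u := by
    have h1 : ∀ i : Fin n, HasFDerivAt (fun u : E => a i/2 * Real.exp (2 * β i u) - t i * β i u)
        ((a i * Real.exp (2 * β i u) - t i) • (β i)) u := by
      intro i
      have hb : HasFDerivAt (fun u : E => β i u) (β i) u := (β i).hasFDerivAt
      have h2 : HasFDerivAt (fun u : E => 2 * β i u) ((2:ℝ) • β i) u := hb.const_mul 2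
      have h4 := (h2.exp).const_mul (a i / 2)
      have h5 := hb.const_mul (t i)
      have h6 := h4.sub h5
      refine h6.congr_fderiv ?_
      ext w
      simp only [ContinuousLinearMap.smul_apply, ContinuousLinearMap.coe_sub',
        Pi.sub_apply, smul_eq_mul]
      ring
    have hsum : HasFDerivAt (fun u : E => ∑ i, (a i/2 * Real.exp (2 * β i u) - t i * β i u))
        (∑ i, (a i * Real.exp (2 * β i u) - t i) • (β i)) u :=
      HasFDerivAt.fun_sum (fun i _ => h1 i)
    have hn : HasFDerivAt (fun u : E => δ * ‖u‖^2) ((2*δ) • (innerSL ℝ u)) u := by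
      have h7 := ((hasFDerivAt_id u).norm_sq).const_mul δ
      refine h7.congr_fderiv ?_
      ext w
      simp only [ContinuousLinearMap.smul_apply, innerSL_apply_apply, ContinuousLinearMap.coe_comp',
        Function.comp_apply, ContinuousLinearMap.coe_id', id_eq, two_smul,
        ContinuousLinearMap.add_apply, smul_eq_mul]
      ring
    exact hsum.add hn
  have hmin : IsLocalMin f u := (isMinOn_univ_iff.mpr hu).isLocalMin (by simp)
  have hf0 : (∑ i, (a i * Real.exp (2 * β i u) - t i) • (β i)) + (2*δ) • (innerSL ℝ u) = 0 := by
    rw [← hderiv.fderiv]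
    exact hmin.fderiv_eq_zero
  have heval : ∀ w : E, ∑ i, (a i * Real.exp (2 * β i u) - t i) * β i w = -(2*δ*⟪u,w⟫) := by
    intro w
    have h8 := congrArg (fun L : E →L[ℝ] ℝ => L w) hf0
    simp only [ContinuousLinearMap.add_apply, ContinuousLinearMap.sum_apply,
      ContinuousLinearMap.smul_apply, innerSL_apply_apply, smul_eq_mul,
      ContinuousLinearMap.zero_apply] at h8
    linarith [h8]
  -- bound f u ≤ f 0 = ∑ a i / 2
  have hfu : f u ≤ ∑ i, a i / 2 := by
    have h9 := hu 0
    simp only [hf_def, map_zero, mul_zero, Real.exp_zero, mul_one, norm_zero] at h9 ⊢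
    refine le_trans h9 (le_of_eq ?_)
    simp
  have hsum_le : ∑ i, (a i/2 * Real.exp (2 * β i u) - t i * β i u) + δ * ‖u‖^2 ≤ ∑ i, a i/2 := hfu
  have hnu : 0 ≤ δ * ‖u‖^2 := by positivity
  have hδu : δ * ‖u‖^2 ≤ C := by
    have h1 : (∑ i, m i) + δ * ‖u‖^2 ≤ ∑ i, a i/2 := le_trans (flb u) hfu
    rw [hC_def]
    linarith [h1]
  have hhi : ∀ i, a i/2 * Real.exp (2 * β i u) - t i * β i u ≤ C := by
    intro i
    have he1 : ∑ j ∈ univ.erase i, m j ≤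
        ∑ j ∈ univ.erase i, (a j/2 * Real.exp (2 * β j u) - t j * β j u) :=
      Finset.sum_le_sum (fun j _ => hm j (β j u))
    have he2 : ∑ j ∈ univ.erase i, (a j/2 * Real.exp (2 * β j u) - t j * β j u)
        + (a i/2 * Real.exp (2 * β i u) - t i * β i u)
        = ∑ j, (a j/2 * Real.exp (2 * β j u) - t j * β j u) :=
      Finset.sum_erase_add _ _ (mem_univ i)
    have he3 : ∑ j ∈ univ.erase i, m j + m i = ∑ j, m j :=
      Finset.sum_erase_add _ _ (mem_univ i)
    have := hm0 i
    simp only [hC_def]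
    linarith
  refine ⟨u, ?_, ?_⟩
  · intro i
    have hBnn : ∀ j, 0 ≤ Bi j := fun j => le_trans (ha j) (le_max_left _ _)
    have hle : Bi i ≤ ∑ j, Bi j := Finset.single_le_sum (fun j _ => hBnn j) (mem_univ i)
    refine le_trans ?_ hle
    by_cases h0 : a i = 0
    · simp only [h0, zero_mul]
      exact hBnn i
    · have ha' : 0 < a i := lt_of_le_of_ne (ha i) (Ne.symm h0)
      exact bnd (a i) (t i) C (β i u) ha' (ht i) hC0 (hhi i)
  · intro w
    have h10 := heval w
    rw [h10]
    have hcs : |(⟪u,w⟫ : ℝ)| ≤ ‖u‖ * ‖w‖ := abs_real_inner_le_norm u w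
    have hδe : δ * (4*(C+1)) = ε^2 := by
      rw [hδ_def]; field_simp
    have hδu' : δ * ‖u‖^2 ≤ C := hδu
    exact absbd δ ‖u‖ C ε (⟪u,w⟫ : ℝ) ‖w‖ hδ hC0 hε (norm_nonneg u) hδe hδu' hcs (norm_nonneg w)

lemma keylem' {F : Type*} [NormedAddCommGroup F] [NormedSpace ℝ F] [FiniteDimensional ℝ F]
    (n : ℕ) (a t : Fin n → ℝ) (ha : ∀ i, 0 ≤ a i) (ht : ∀ i, 0 ≤ t i)
    (hat : ∀ i, a i = 0 → t i = 0) (γ : Fin n → F →ₗ[ℝ] ℝ) :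
    ∃ B : ℝ, ∀ ε : ℝ, 0 < ε → ∃ ξ : F,
      (∀ i, a i * Real.exp (2 * γ i ξ) ≤ B) ∧
      (∀ η : F, |∑ i, (a i * Real.exp (2 * γ i ξ) - t i) * γ i η| ≤ ε * ‖toEuclidean η‖) := by
  set e : F ≃L[ℝ] EuclideanSpace ℝ (Fin (Module.finrank ℝ F)) := toEuclidean with he_def
  set β : Fin n → EuclideanSpace ℝ (Fin (Module.finrank ℝ F)) →L[ℝ] ℝ :=
    fun i => LinearMap.toContinuousLinearMap
      ((γ i).comp (((e.symm : EuclideanSpace ℝ (Fin (Module.finrank ℝ F)) →L[ℝ] F)) :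
        EuclideanSpace ℝ (Fin (Module.finrank ℝ F)) →ₗ[ℝ] F)) with hβ_def
  have hβ : ∀ i w, β i w = γ i (e.symm w) := by
    intro i w
    simp [hβ_def]
  obtain ⟨B, hB⟩ := keylem n a t ha ht hat β
  refine ⟨B, fun ε hε => ?_⟩
  obtain ⟨u, h1, h2⟩ := hB ε hε
  refine ⟨e.symm u, ?_, ?_⟩
  · intro i
    have := h1 i
    rwa [hβ] at this
  · intro η
    have h3 := h2 (e η)
    simp_rw [hβ, ContinuousLinearEquiv.symm_apply_apply] at h3
    exact h3
set_option synthInstance.maxHeartbeats 1000000 in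
set_option maxHeartbeats 1000000 in
theorem image_gradientMap_eq_cone_and_generic
    (V : Type*) [NormedAddCommGroup V] [InnerProductSpace ℝ V] [FiniteDimensional ℝ V]
    (n : ℕ) (𝔞 : Submodule ℝ (V →L[ℝ] V))
    (habelian : ∀ ξ η : 𝔞, (ξ : V →L[ℝ] V) * η = (η : V →L[ℝ] V) * ξ)
    (v : OrthonormalBasis (Fin n) ℝ V) (α : Fin n → (𝔞 →ₗ[ℝ] ℝ))
    (heig : ∀ (ξ : 𝔞) (i : Fin n), (ξ : V →L[ℝ] V) (v i) = α i ξ • v i)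
    (μ : V → 𝔞 → ℝ) (hμ : ∀ (y : V) (ξ : 𝔞), μ y ξ = ⟪(ξ : V →L[ℝ] V) y, y⟫) :
    (μ '' Set.univ = {φ : 𝔞 → ℝ | ∃ lam : Fin n → ℝ, (∀ i, 0 ≤ lam i) ∧
      φ = fun ξ : 𝔞 => ∑ i, lam i * α i ξ}) ∧
    (IsOpen {x : V |
        μ '' closure {y : V | ∃ ξ : 𝔞, y = NormedSpace.exp (ξ : V →L[ℝ] V) x} =
          μ '' Set.univ} ∧
      Dense {x : V |
        μ '' closure {y : V | ∃ ξ : 𝔞, y = NormedSpace.exp (ξ : V →L[ℝ] V) x} =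
          μ '' Set.univ}) := by
  classical
  -- coordinates of a sum
  have hinner : ∀ (r : Fin n → ℝ) (i : Fin n), ⟪v i, ∑ j, r j • v j⟫ = r i := by
    intro r i
    simpa using v.orthonormal.inner_right_fintype r i
  -- the gradient map in coordinates
  have hμsum : ∀ (y : V) (ξ : 𝔞), μ y ξ = ∑ i, ⟪v i, y⟫^2 * α i ξ := by
    intro y ξ
    rw [hμ]
    have hy : (ξ : V →L[ℝ] V) y = ∑ i, (⟪v i, y⟫ * α i ξ) • v i := by
      conv_lhs => rw [← v.sum_repr' y]
      rw [map_sum]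
      refine Finset.sum_congr rfl (fun i _ => ?_)
      rw [map_smul, heig, smul_smul]
    rw [hy, sum_inner]
    refine Finset.sum_congr rfl (fun i _ => ?_)
    rw [real_inner_smul_left]
    ring
  -- action of exp on coordinates
  have hexp : ∀ (ξ : 𝔞) (x : V), NormedSpace.exp (ξ : V →L[ℝ] V) x
      = ∑ i, (Real.exp (α i ξ) * ⟪v i, x⟫) • v i := by
    intro ξ x
    conv_lhs => rw [← v.sum_repr' x]
    rw [map_sum]
    refine Finset.sum_congr rfl (fun i _ => ?_)
    rw [map_smul, exp_eig _ (α i ξ) (v i) (heig ξ i), smul_smul, mul_comm]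
  have hcoord : ∀ (ξ : 𝔞) (x : V) (i : Fin n),
      ⟪v i, NormedSpace.exp (ξ : V →L[ℝ] V) x⟫ = Real.exp (α i ξ) * ⟪v i, x⟫ := by
    intro ξ x i
    rw [hexp, hinner]
  -- Part 1
  have hpart1 : μ '' Set.univ = {φ : 𝔞 → ℝ | ∃ lam : Fin n → ℝ, (∀ i, 0 ≤ lam i) ∧
      φ = fun ξ : 𝔞 => ∑ i, lam i * α i ξ} := by
    ext φ
    constructor
    · rintro ⟨y, -, rfl⟩
      exact ⟨fun i => ⟪v i, y⟫^2, fun i => sq_nonneg _, funext (fun ξ => hμsum y ξ)⟩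
    · rintro ⟨lam, hlam, rfl⟩
      refine ⟨∑ i, Real.sqrt (lam i) • v i, Set.mem_univ _, ?_⟩
      funext ξ
      rw [hμsum]
      refine Finset.sum_congr rfl (fun i _ => ?_)
      rw [hinner, Real.sq_sqrt (hlam i)]
  -- support can only shrink on orbit closures
  have hsupp : ∀ (x y : V),
      y ∈ closure {y : V | ∃ ξ : 𝔞, y = NormedSpace.exp (ξ : V →L[ℝ] V) x} →
      ∀ i, ⟪v i, x⟫ = 0 → ⟪v i, y⟫ = 0 := by
    intro x y hy i hxi
    have hcl : IsClosed {z : V | ⟪v i, z⟫ = 0} :=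
      isClosed_eq (Continuous.inner continuous_const continuous_id) continuous_const
    have hsub : {y : V | ∃ ξ : 𝔞, y = NormedSpace.exp (ξ : V →L[ℝ] V) x}
        ⊆ {z : V | ⟪v i, z⟫ = 0} := by
      rintro z ⟨ξ, rfl⟩
      rw [Set.mem_setOf_eq, hcoord, hxi, mul_zero]
    exact closure_minimal hsub hcl hy
  -- the key existence result
  have hR3 : ∀ (x : V) (tt : Fin n → ℝ), (∀ i, 0 ≤ tt i) → (∀ i, ⟪v i, x⟫ = 0 → tt i = 0) →
      ∃ z ∈ closure {y : V | ∃ ξ : 𝔞, y = NormedSpace.exp (ξ : V →L[ℝ] V) x},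
        ∀ ξ : 𝔞, μ z ξ = ∑ i, tt i * α i ξ := by
    intro x tt htt httsupp
    set a : Fin n → ℝ := fun i => ⟪v i, x⟫^2 with ha_def
    have ha : ∀ i, 0 ≤ a i := fun i => sq_nonneg _
    have hat : ∀ i, a i = 0 → tt i = 0 := by
      intro i hai
      exact httsupp i (by
        have := hai
        rw [ha_def] at this
        exact pow_eq_zero_iff (two_ne_zero) |>.mp this)
    obtain ⟨B, hB⟩ := keylem' (F := 𝔞) n a tt ha htt hat α
    choose u hu1 hu2 using fun k : ℕ => hB (1/((k:ℝ)+1)) (by positivity)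
    set y : ℕ → V := fun k => NormedSpace.exp ((u k : V →L[ℝ] V)) x with hy_def
    have hyO : ∀ k, y k ∈ {y : V | ∃ ξ : 𝔞, y = NormedSpace.exp (ξ : V →L[ℝ] V) x} :=
      fun k => ⟨u k, rfl⟩
    have hysq : ∀ k i, ⟪v i, y k⟫^2 = a i * Real.exp (2 * α i (u k)) := by
      intro k i
      rw [hy_def]
      simp only
      rw [hcoord, mul_pow]
      have hsq : Real.exp ((α i) (u k)) ^ 2 = Real.exp (2 * (α i) (u k)) := by
        rw [sq, ← Real.exp_add, two_mul]
      rw [hsq, ha_def]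
      ring
    have hbound : ∀ k, ‖y k‖ ≤ ∑ _i : Fin n, Real.sqrt B := by
      intro k
      rw [hy_def]
      simp only
      rw [hexp]
      refine le_trans (norm_sum_le _ _) (Finset.sum_le_sum (fun i _ => ?_))
      rw [norm_smul, v.orthonormal.1 i, mul_one, Real.norm_eq_abs]
      have h1 : |Real.exp (α i (u k)) * ⟪v i, x⟫| = Real.sqrt (⟪v i, y k⟫^2) := by
        rw [hy_def]
        simp only
        rw [hcoord, Real.sqrt_sq_eq_abs]
      rw [h1, hysq]
      exact Real.sqrt_le_sqrt (hu1 k i)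
    obtain ⟨z, _, φf, hφmono, hφlim⟩ :=
      tendsto_subseq_of_bounded (Metric.isBounded_closedBall
        (x := (0:V)) (r := ∑ _i : Fin n, Real.sqrt B))
        (fun k => by simpa [Metric.mem_closedBall, dist_zero_right] using hbound k)
    have hzcl : z ∈ closure {y : V | ∃ ξ : 𝔞, y = NormedSpace.exp (ξ : V →L[ℝ] V) x} :=
      isClosed_closure.mem_of_tendsto hφlim
        (Filter.Eventually.of_forall (fun k => subset_closure (hyO _)))
    refine ⟨z, hzcl, ?_⟩
    intro ξ
    have hcont2 : Continuous fun w : V => (⟪(ξ : V →L[ℝ] V) w, w⟫ : ℝ) :=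
      Continuous.inner ((ξ : V →L[ℝ] V).continuous) continuous_id
    have L1 : Filter.Tendsto (fun k => μ (y (φf k)) ξ) Filter.atTop (nhds (μ z ξ)) := by
      have h2 := (hcont2.tendsto z).comp hφlim
      simp only [Function.comp_def] at h2
      simpa [hμ] using h2
    have hμy : ∀ k, μ (y k) ξ = ∑ i, (a i * Real.exp (2 * α i (u k))) * α i ξ := by
      intro k
      rw [hμsum]
      exact Finset.sum_congr rfl (fun i _ => by rw [hysq])
    have herr : ∀ k : ℕ, |μ (y k) ξ - ∑ i, tt i * α i ξ| ≤ (1/((k:ℝ)+1)) * ‖toEuclidean ξ‖ := by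
      intro k
      have h2 := hu2 k ξ
      rw [hμy]
      have h3 : ∑ i, (a i * Real.exp (2 * α i (u k))) * α i ξ - ∑ i, tt i * α i ξ
          = ∑ i, (a i * Real.exp (2 * α i (u k)) - tt i) * α i ξ := by
        rw [← Finset.sum_sub_distrib]
        exact Finset.sum_congr rfl (fun i _ => by ring)
      rw [h3]
      exact h2
    have L2 : Filter.Tendsto (fun k => μ (y (φf k)) ξ) Filter.atTop
        (nhds (∑ i, tt i * α i ξ)) := by
      have hb : ∀ k : ℕ, ‖μ (y (φf k)) ξ - ∑ i, tt i * α i ξ‖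
          ≤ ‖toEuclidean ξ‖ * (1/((k:ℝ)+1)) := by
        intro k
        have h4 := herr (φf k)
        have h5 : (1:ℝ)/((φf k : ℝ)+1) ≤ 1/((k:ℝ)+1) := by
          apply one_div_le_one_div_of_le (by positivity)
          have h6 : k ≤ φf k := hφmono.le_apply
          have h7 : (k:ℝ) ≤ (φf k : ℝ) := by exact_mod_cast h6
          linarith
        rw [Real.norm_eq_abs]
        calc |μ (y (φf k)) ξ - ∑ i, tt i * α i ξ| ≤ (1/((φf k : ℝ)+1)) * ‖toEuclidean ξ‖ := h4
          _ ≤ (1/((k:ℝ)+1)) * ‖toEuclidean ξ‖ := by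
              exact mul_le_mul_of_nonneg_right h5 (norm_nonneg _)
          _ = ‖toEuclidean ξ‖ * (1/((k:ℝ)+1)) := by ring
      have h0 : Filter.Tendsto (fun k : ℕ => ‖toEuclidean ξ‖ * (1/((k:ℝ)+1)))
          Filter.atTop (nhds 0) := by
        have := tendsto_one_div_add_atTop_nhds_zero_nat.const_mul ‖toEuclidean ξ‖
        simpa using this
      have h8 := squeeze_zero_norm hb h0
      have h9 := h8.add_const (∑ i, tt i * α i ξ)
      simpa using h9
    exact tendsto_nhds_unique L1 L2
  -- characterization of the good set
  have hQchar : ∀ x : V,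
      (μ '' closure {y : V | ∃ ξ : 𝔞, y = NormedSpace.exp (ξ : V →L[ℝ] V) x} = μ '' Set.univ)
      ↔ (∀ j, ∃ tt : Fin n → ℝ, (∀ i, 0 ≤ tt i) ∧ (∀ i, ⟪v i, x⟫ = 0 → tt i = 0) ∧
          (∀ ξ : 𝔞, α j ξ = ∑ i, tt i * α i ξ)) := by
    intro x
    constructor
    · intro h j
      have hmem : μ (v j) ∈ μ '' Set.univ := ⟨v j, Set.mem_univ _, rfl⟩
      rw [← h] at hmem
      obtain ⟨z, hz, hzμ⟩ := hmem
      refine ⟨fun i => ⟪v i, z⟫^2, fun i => sq_nonneg _, fun i hi => ?_, fun ξ => ?_⟩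
      · show ⟪v i, z⟫^2 = 0
        rw [hsupp x z hz i hi]
        ring
      · have h1 : μ (v j) ξ = α j ξ := by
          rw [hμsum]
          have h2 : ∀ i : Fin n, ⟪v i, v j⟫^2 * α i ξ
              = (if i = j then (1:ℝ) else 0) * α i ξ := by
            intro i
            by_cases hij : i = j
            · subst hij
              rw [if_pos rfl, real_inner_self_eq_norm_sq, v.orthonormal.1 i]
              norm_num
            · rw [if_neg hij, v.orthonormal.2 hij]
              norm_num
          rw [Finset.sum_congr rfl (fun i _ => h2 i)]
          simp
        rw [← h1, ← hzμ, hμsum]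
    · intro hQ
      apply Set.Subset.antisymm (Set.image_mono (Set.subset_univ _))
      intro φ hφ
      rw [hpart1] at hφ
      obtain ⟨lam, hlam, rfl⟩ := hφ
      choose T hT1 hT2 hT3 using hQ
      set tt : Fin n → ℝ := fun i => ∑ j, lam j * T j i with htt_def
      have htt : ∀ i, 0 ≤ tt i :=
        fun i => Finset.sum_nonneg (fun j _ => mul_nonneg (hlam j) (hT1 j i))
      have httsupp : ∀ i, ⟪v i, x⟫ = 0 → tt i = 0 := by
        intro i hi
        rw [htt_def]
        simp only
        exact Finset.sum_eq_zero (fun j _ => by rw [hT2 j i hi, mul_zero])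
      obtain ⟨z, hz, hzμ⟩ := hR3 x tt htt httsupp
      refine ⟨z, hz, ?_⟩
      funext ξ
      rw [hzμ ξ, htt_def]
      simp only
      calc ∑ i, (∑ j, lam j * T j i) * α i ξ
          = ∑ i, ∑ j, lam j * T j i * α i ξ := by
            exact Finset.sum_congr rfl (fun i _ => by rw [Finset.sum_mul])
        _ = ∑ j, ∑ i, lam j * T j i * α i ξ := Finset.sum_comm
        _ = ∑ j, lam j * ∑ i, T j i * α i ξ := by
            refine Finset.sum_congr rfl (fun j _ => ?_)
            rw [Finset.mul_sum]
            exact Finset.sum_congr rfl (fun i _ => by ring)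
        _ = ∑ j, lam j * α j ξ := by
            exact Finset.sum_congr rfl (fun j _ => by rw [← hT3 j ξ])
  -- openness
  have hopen : IsOpen {x : V |
      μ '' closure {y : V | ∃ ξ : 𝔞, y = NormedSpace.exp (ξ : V →L[ℝ] V) x} =
        μ '' Set.univ} := by
    rw [isOpen_iff_mem_nhds]
    intro x hx
    rw [Set.mem_setOf_eq, hQchar] at hx
    have hN : IsOpen (⋂ i : Fin n, {w : V | ⟪v i, x⟫ ≠ 0 → ⟪v i, w⟫ ≠ 0}) := by
      refine isOpen_iInter_of_finite (fun i => ?_)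
      by_cases hc : ⟪v i, x⟫ = 0
      · have : {w : V | ⟪v i, x⟫ ≠ 0 → ⟪v i, w⟫ ≠ 0} = Set.univ := by
          ext w; simp [hc]
        rw [this]; exact isOpen_univ
      · have : {w : V | ⟪v i, x⟫ ≠ 0 → ⟪v i, w⟫ ≠ 0} = {w : V | ⟪v i, w⟫ = 0}ᶜ := by
          ext w; simp [hc]
        rw [this]
        exact (isClosed_eq (Continuous.inner continuous_const continuous_id)
          continuous_const).isOpen_compl
    refine Filter.mem_of_superset (hN.mem_nhds ?_) ?_
    · exact Set.mem_iInter.mpr (fun i hi => hi)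
    · intro w hw
      rw [Set.mem_setOf_eq, hQchar]
      intro j
      obtain ⟨tt, h1, h2, h3⟩ := hx j
      refine ⟨tt, h1, fun i hwi => ?_, h3⟩
      by_cases hxi : ⟪v i, x⟫ = 0
      · exact h2 i hxi
      · exact (Set.mem_iInter.mp hw i hxi hwi).elim
  -- density
  have hdense : Dense {x : V |
      μ '' closure {y : V | ∃ ξ : 𝔞, y = NormedSpace.exp (ξ : V →L[ℝ] V) x} =
        μ '' Set.univ} := by
    have hUopen : ∀ i : Fin n, IsOpen {x : V | ⟪v i, x⟫ ≠ 0} := by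
      intro i
      have : {x : V | ⟪v i, x⟫ ≠ 0} = {x : V | ⟪v i, x⟫ = 0}ᶜ := rfl
      rw [this]
      exact (isClosed_eq (Continuous.inner continuous_const continuous_id)
        continuous_const).isOpen_compl
    have hUdense : ∀ i : Fin n, Dense {x : V | ⟪v i, x⟫ ≠ 0} := by
      intro i
      rw [Metric.dense_iff]
      intro x r hr
      by_cases hc : ⟪v i, x⟫ = 0
      · refine ⟨x + (r/2) • v i, ?_, ?_⟩
        · rw [Metric.mem_ball, dist_eq_norm]
          have : x + (r/2) • v i - x = (r/2) • v i := by abel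
          rw [this, norm_smul, v.orthonormal.1 i, mul_one, Real.norm_eq_abs,
            abs_of_pos (by linarith)]
          linarith
        · rw [Set.mem_setOf_eq, inner_add_right, hc, real_inner_smul_right,
            real_inner_self_eq_norm_sq, v.orthonormal.1 i]
          norm_num
          linarith
      · exact ⟨x, Metric.mem_ball_self hr, hc⟩
    have hU : Dense (⋂ i : Fin n, {x : V | ⟪v i, x⟫ ≠ 0}) :=
      dense_iInter_of_isOpen hUopen hUdense
    refine hU.mono ?_
    intro x hx
    rw [Set.mem_setOf_eq, hQchar]
    intro j
    refine ⟨fun i => if i = j then 1 else 0, ?_, ?_, ?_⟩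
    · intro i; by_cases h : i = j <;> simp [h]
    · intro i hi
      exact (Set.mem_iInter.mp hx i hi).elim
    · intro ξ
      rw [Finset.sum_congr rfl (fun i (_ : i ∈ univ) => ite_mul (i = j) 1 0 (α i ξ))]
      simp
  exact ⟨hpart1, hopen, hdense⟩
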